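/- On ℝ⁶ with standard basis (f_1,…,f_6), let A be the linear map with A f_1 = s_1 f_1, A f_2 = −s_1 f_2, A f_3 = s_2 f_3, A f_4 = −s_2 f_4, A f_5 = s_3 f_5, A f_6 = −s_3 f_6, for real numbers s_1, s_2, s_3 not all zero. Set δ = s_1² + s_2² + s_3², σ_1 = (s_1+s_2+s_3)², σ_2 = (s_1+s_2−s_3)², σ_3 = (s_1−s_2+s_3)², σ_4 = (−s_1+s_2+s_3)², and for t < 1/(8δ) set ε(t) = −ln(1 − 8δt)/(8δ). Define the curve of alternating 3-forms χ(t) = −e^{−σ_1 ε(t)}·f^{246} + e^{−σ_2 ε(t)}·f^{136} + e^{−σ_3 ε(t)}·f^{145} + e^{−σ_4 ε(t)}·f^{235}. Then χ(0) = f^{136} + f^{145} + f^{235} − f^{246}, and for every t < 1/(8δ) the derivative of χ at t exists and equals −(1 − 8δt)^{−1}·θ(A)(θ(A)(χ(t))). In particular χ solves this ODE on the interval (−∞, 1/(8δ)), so the solution is ancient. -/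

import Mathlib

/-- The derivation action `θ(A)` of an endomorphism `A` on (trilinear, alternating) 3-forms:
`(θ(A)α)(x,y,z) = -α(Ax,y,z) - α(x,Ay,z) - α(x,y,Az)`. -/
def theta (A : (Fin 6 → ℝ) →ₗ[ℝ] (Fin 6 → ℝ))
    (α : (Fin 6 → ℝ) → (Fin 6 → ℝ) → (Fin 6 → ℝ) → ℝ) :
    (Fin 6 → ℝ) → (Fin 6 → ℝ) → (Fin 6 → ℝ) → ℝ :=
  fun x y z => -α (A x) y z - α x (A y) z - α x y (A z)

/-- The alternating 3-form `f^i ∧ f^j ∧ f^k` on `ℝ⁶`: the determinant of the 3×3 matrix whose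
rows are the `i`-th, `j`-th and `k`-th coordinates of the three arguments. -/
def eform (i j k : Fin 6) : (Fin 6 → ℝ) → (Fin 6 → ℝ) → (Fin 6 → ℝ) → ℝ :=
  fun x y z => Matrix.det !![x i, x j, x k; y i, y j, y k; z i, z j, z k]

set_option maxHeartbeats 2000000 in
/-- for `A = diag(s₁,-s₁,s₂,-s₂,s₃,-s₃)` with `(s₁,s₂,s₃) ≠ 0`,
`δ = s₁²+s₂²+s₃²`, `σ₁ = (s₁+s₂+s₃)²`, `σ₂ = (s₁+s₂-s₃)²`, `σ₃ = (s₁-s₂+s₃)²`,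
`σ₄ = (-s₁+s₂+s₃)²`, `ε(t) = -ln(1-8δt)/(8δ)` and
`χ(t) = -e^{-σ₁ε(t)} f^{246} + e^{-σ₂ε(t)} f^{136} + e^{-σ₃ε(t)} f^{145} + e^{-σ₄ε(t)} f^{235}`,
the curve `χ` satisfies `χ(0) = ψ₀ = f^{136} + f^{145} + f^{235} - f^{246}` and, for every
`t < 1/(8δ)`, its derivative exists and equals `-(1-8δt)⁻¹ · θ(A)(θ(A)(χ(t)))` (the derivative
being taken pointwise on the arguments of the 3-forms); so `χ` solves the ODE on the whole
interval `(-∞, 1/(8δ))`, i.e. the solution is ancient. -/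
theorem stmt7 (s₁ s₂ s₃ : ℝ) (hs : ¬(s₁ = 0 ∧ s₂ = 0 ∧ s₃ = 0))
    (A : (Fin 6 → ℝ) →ₗ[ℝ] (Fin 6 → ℝ))
    (h1 : A (Pi.single 0 1) = s₁ • (Pi.single 0 1 : Fin 6 → ℝ))
    (h2 : A (Pi.single 1 1) = -s₁ • (Pi.single 1 1 : Fin 6 → ℝ))
    (h3 : A (Pi.single 2 1) = s₂ • (Pi.single 2 1 : Fin 6 → ℝ))
    (h4 : A (Pi.single 3 1) = -s₂ • (Pi.single 3 1 : Fin 6 → ℝ))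
    (h5 : A (Pi.single 4 1) = s₃ • (Pi.single 4 1 : Fin 6 → ℝ))
    (h6 : A (Pi.single 5 1) = -s₃ • (Pi.single 5 1 : Fin 6 → ℝ))
    (δ σ₁ σ₂ σ₃ σ₄ : ℝ)
    (hδ : δ = s₁ ^ 2 + s₂ ^ 2 + s₃ ^ 2)
    (hσ₁ : σ₁ = (s₁ + s₂ + s₃) ^ 2) (hσ₂ : σ₂ = (s₁ + s₂ - s₃) ^ 2)
    (hσ₃ : σ₃ = (s₁ - s₂ + s₃) ^ 2) (hσ₄ : σ₄ = (-s₁ + s₂ + s₃) ^ 2)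
    (ε : ℝ → ℝ) (hε : ∀ t, ε t = -Real.log (1 - 8 * δ * t) / (8 * δ))
    (χ : ℝ → (Fin 6 → ℝ) → (Fin 6 → ℝ) → (Fin 6 → ℝ) → ℝ)
    (hχ : ∀ t, χ t =
      (-Real.exp (-(σ₁ * ε t))) • eform 1 3 5 + Real.exp (-(σ₂ * ε t)) • eform 0 2 5 +
        Real.exp (-(σ₃ * ε t)) • eform 0 3 4 + Real.exp (-(σ₄ * ε t)) • eform 1 2 4) :
    χ 0 = eform 0 2 5 + eform 0 3 4 + eform 1 2 4 - eform 1 3 5 ∧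
    ∀ t : ℝ, t < 1 / (8 * δ) → ∀ x y z : Fin 6 → ℝ,
      HasDerivAt (fun u => χ u x y z)
        (-(1 - 8 * δ * t)⁻¹ * theta A (theta A (χ t)) x y z) t := by
  -- basic positivity
  have hδpos : 0 < δ := by
    rw [hδ]
    rcases not_and_or.1 hs with h | h
    · have := sq_nonneg s₂; have := sq_nonneg s₃; have := (pow_pos (abs_pos.2 h) 2)
      nlinarith [sq_abs s₁, pow_pos (abs_pos.2 h) 2, sq_nonneg s₂, sq_nonneg s₃]
    · rcases not_and_or.1 h with h | h
      · nlinarith [sq_abs s₂, pow_pos (abs_pos.2 h) 2, sq_nonneg s₁, sq_nonneg s₃]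
      · nlinarith [sq_abs s₃, pow_pos (abs_pos.2 h) 2, sq_nonneg s₁, sq_nonneg s₂]
  have h8δ : (0 : ℝ) < 8 * δ := by linarith
  -- the action of A on coordinates
  have hv : ∀ v : Fin 6 → ℝ, v = v 0 • (Pi.single 0 1 : Fin 6 → ℝ) +
      v 1 • (Pi.single 1 1 : Fin 6 → ℝ) + v 2 • (Pi.single 2 1 : Fin 6 → ℝ) +
      v 3 • (Pi.single 3 1 : Fin 6 → ℝ) + v 4 • (Pi.single 4 1 : Fin 6 → ℝ) +
      v 5 • (Pi.single 5 1 : Fin 6 → ℝ) := by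
    intro v; funext j; fin_cases j <;> simp
  have hA0 : ∀ v : Fin 6 → ℝ, A v 0 = s₁ * v 0 := by
    intro v; conv_lhs => rw [hv v]
    simp [h1, h2, h3, h4, h5, h6, Pi.single_apply]; ring
  have hA1 : ∀ v : Fin 6 → ℝ, A v 1 = -s₁ * v 1 := by
    intro v; conv_lhs => rw [hv v]
    simp [h1, h2, h3, h4, h5, h6, Pi.single_apply]; ring
  have hA2 : ∀ v : Fin 6 → ℝ, A v 2 = s₂ * v 2 := by
    intro v; conv_lhs => rw [hv v]
    simp [h1, h2, h3, h4, h5, h6, Pi.single_apply]; ring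
  have hA3 : ∀ v : Fin 6 → ℝ, A v 3 = -s₂ * v 3 := by
    intro v; conv_lhs => rw [hv v]
    simp [h1, h2, h3, h4, h5, h6, Pi.single_apply]; ring
  have hA4 : ∀ v : Fin 6 → ℝ, A v 4 = s₃ * v 4 := by
    intro v; conv_lhs => rw [hv v]
    simp [h1, h2, h3, h4, h5, h6, Pi.single_apply]; ring
  have hA5 : ∀ v : Fin 6 → ℝ, A v 5 = -s₃ * v 5 := by
    intro v; conv_lhs => rw [hv v]
    simp [h1, h2, h3, h4, h5, h6, Pi.single_apply]; ring
  constructor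
  · -- initial condition
    have hε0 : ε 0 = 0 := by rw [hε]; simp
    rw [hχ 0, hε0]
    funext x y z
    simp [Pi.add_apply, Pi.sub_apply, Pi.smul_apply, smul_eq_mul]
    ring
  · intro t ht x y z
    have hpos : 0 < 1 - 8 * δ * t := by
      have : 8 * δ * t < 8 * δ * (1 / (8 * δ)) := by
        exact (mul_lt_mul_iff_right₀ h8δ).2 ht
      rw [mul_one_div, div_self (ne_of_gt h8δ)] at this
      linarith
    -- derivative of ε
    have hεd : HasDerivAt ε ((1 - 8 * δ * t)⁻¹) t := by
      have hin : HasDerivAt (fun u : ℝ => 1 - 8 * δ * u) (-(8 * δ)) t := by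
        simpa using ((hasDerivAt_id t).const_mul (8 * δ)).const_sub 1
      have hlog := hin.log (ne_of_gt hpos)
      have := (hlog.neg).div_const (8 * δ)
      have heq : (fun u : ℝ => -Real.log (1 - 8 * δ * u) / (8 * δ)) = ε := by
        funext u; rw [hε u]
      simp only [Pi.neg_apply] at this
      rw [heq] at this
      rw [neg_div (1 - 8 * δ * t) (8 * δ), neg_neg, div_right_comm, div_self h8δ.ne', one_div] at this
      exact this
    -- derivatives of the four exponential coefficients
    have hd1 : HasDerivAt (fun u => Real.exp (-(σ₁ * ε u)))
        (Real.exp (-(σ₁ * ε t)) * -(σ₁ * (1 - 8 * δ * t)⁻¹)) t :=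
      ((hεd.const_mul σ₁).neg).exp
    have hd2 : HasDerivAt (fun u => Real.exp (-(σ₂ * ε u)))
        (Real.exp (-(σ₂ * ε t)) * -(σ₂ * (1 - 8 * δ * t)⁻¹)) t :=
      ((hεd.const_mul σ₂).neg).exp
    have hd3 : HasDerivAt (fun u => Real.exp (-(σ₃ * ε u)))
        (Real.exp (-(σ₃ * ε t)) * -(σ₃ * (1 - 8 * δ * t)⁻¹)) t :=
      ((hεd.const_mul σ₃).neg).exp
    have hd4 : HasDerivAt (fun u => Real.exp (-(σ₄ * ε u)))
        (Real.exp (-(σ₄ * ε t)) * -(σ₄ * (1 - 8 * δ * t)⁻¹)) t :=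
      ((hεd.const_mul σ₄).neg).exp
    have hfun : (fun u => χ u x y z) = fun u =>
        (-Real.exp (-(σ₁ * ε u))) * eform 1 3 5 x y z +
          Real.exp (-(σ₂ * ε u)) * eform 0 2 5 x y z +
          Real.exp (-(σ₃ * ε u)) * eform 0 3 4 x y z +
          Real.exp (-(σ₄ * ε u)) * eform 1 2 4 x y z := by
      funext u; rw [hχ u]; simp [Pi.add_apply, Pi.smul_apply, smul_eq_mul]
    have hD : HasDerivAt (fun u => χ u x y z)
        ((-(Real.exp (-(σ₁ * ε t)) * -(σ₁ * (1 - 8 * δ * t)⁻¹))) * eform 1 3 5 x y z +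
          (Real.exp (-(σ₂ * ε t)) * -(σ₂ * (1 - 8 * δ * t)⁻¹)) * eform 0 2 5 x y z +
          (Real.exp (-(σ₃ * ε t)) * -(σ₃ * (1 - 8 * δ * t)⁻¹)) * eform 0 3 4 x y z +
          (Real.exp (-(σ₄ * ε t)) * -(σ₄ * (1 - 8 * δ * t)⁻¹)) * eform 1 2 4 x y z) t := by
      rw [hfun]
      exact (((hd1.neg.mul_const _).add (hd2.mul_const _)).add
        (hd3.mul_const _)).add (hd4.mul_const _)
    have hef : ∀ (i j k : Fin 6) (x y z : Fin 6 → ℝ), eform i j k x y z =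
        x i * (y j * z k) - x i * (y k * z j) - x j * (y i * z k) + x j * (y k * z i) +
          x k * (y i * z j) - x k * (y j * z i) := by
      intro i j k x y z
      simp [eform, Matrix.det_fin_three]
      ring
    convert hD using 1
    -- it remains to identify the derivative value
    subst hσ₁ hσ₂ hσ₃ hσ₄
    simp only [theta, hχ t, Pi.add_apply, Pi.smul_apply, smul_eq_mul, hef,
      hA0, hA1, hA2, hA3, hA4, hA5]
    ring
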